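/- Let n be a natural number, let x₀ < x₁ < ⋯ < x_{n+1} be real numbers and y₀, …, y_{n+1} be real numbers. For 0 ≤ i ≤ n set wᵢ = (y_{i+1} − yᵢ)/(x_{i+1} − xᵢ), set w_{−1} = 0, and assume wᵢ ≠ w_{i−1} for every 0 ≤ i ≤ n. Define R₀(t) = σ(|w₀ − w_{−1}|·(t − x₀)) and recursively R_{i+1}(t) = σ(|w_{i+1} − wᵢ|·(Rᵢ(t)/|wᵢ − w_{i−1}| − x_{i+1} + xᵢ)) for 0 ≤ i ≤ n − 1. Then for every j with 0 ≤ j ≤ n and every t ∈ [x_j, x_{j+1}], one has y_j + w_j·(t − x_j) = y₀ + Σ_{i=0}^{n} sgn(wᵢ − w_{i−1})·Rᵢ(t), where sgn(a) = 1 if a > 0 and sgn(a) = −1 if a < 0. (This is the one-neuron-wide deep ReLU representation of a continuous piecewise linear function, dual to the wide representation.) -/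
import Mathlib

lemma real_sign_mul_abs (a : ℝ) : Real.sign a * |a| = a := by
  rcases lt_trichotomy a 0 with h | h | h
  · rw [Real.sign_of_neg h, abs_of_neg h]; ring
  · simp [h]
  · rw [Real.sign_of_pos h, abs_of_pos h]; ring

/-- The one-neuron-wide deep ReLU representation of a continuous piecewise linear
function, dual to the wide representation.  Here `σ(u) = max u 0` is ReLU,
`R` is the recursively defined sequence of ramps, `w (-1) = 0`, and
`Real.sign a = 1` for `a > 0`, `-1` for `a < 0`. -/
theorem deep_relu_representation (n : ℕ) (x y w : ℕ → ℝ) (R : ℕ → ℝ → ℝ)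
    (hx : ∀ i ≤ n, x i < x (i + 1))
    (hw : ∀ i ≤ n, w i = (y (i + 1) - y i) / (x (i + 1) - x i))
    (hne : ∀ i ≤ n, w i ≠ (if i = 0 then 0 else w (i - 1)))
    (hR0 : ∀ t : ℝ, R 0 t = max (|w 0 - 0| * (t - x 0)) 0)
    (hRs : ∀ i : ℕ, i + 1 ≤ n → ∀ t : ℝ,
      R (i + 1) t = max (|w (i + 1) - w i| *
        (R i t / |w i - (if i = 0 then 0 else w (i - 1))| - x (i + 1) + x i)) 0) :
    ∀ j ≤ n, ∀ t ∈ Set.Icc (x j) (x (j + 1)),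
      y j + w j * (t - x j) =
        y 0 + ∑ i ∈ Finset.range (n + 1),
          Real.sign (w i - (if i = 0 then 0 else w (i - 1))) * R i t := by
  intro j hj t ht
  obtain ⟨ht1, ht2⟩ := ht
  have hxmono : ∀ a b : ℕ, a ≤ b → b ≤ n + 1 → x a ≤ x b := by
    intro a b hab hb
    induction b with
    | zero => simp [Nat.le_zero.mp hab]
    | succ m ih =>
      rcases Nat.eq_or_lt_of_le hab with h | h
      · simp [h]
      · exact le_trans (ih (Nat.lt_succ_iff.mp h) (by omega))
          (le_of_lt (hx m (by omega)))
  have hd : ∀ i ≤ n, |w i - (if i = 0 then 0 else w (i - 1))| ≠ 0 := by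
    intro i hi
    exact abs_ne_zero.mpr (sub_ne_zero.mpr (hne i hi))
  -- Part A: for i ≤ j, R i t = |Δ_i| * (t - x i)
  have hA : ∀ i ≤ j, R i t = |w i - (if i = 0 then 0 else w (i - 1))| * (t - x i) := by
    intro i hi
    induction i with
    | zero =>
      rw [hR0]
      have h0 : x 0 ≤ t := le_trans (hxmono 0 j (Nat.zero_le _) (by omega)) ht1
      simp only [if_pos rfl]
      exact max_eq_left (mul_nonneg (abs_nonneg _) (by linarith))
    | succ m ih =>
      rw [hRs m (by omega), ih (by omega)]
      rw [mul_div_cancel_left₀ _ (hd m (by omega))]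
      have hxm : x (m + 1) ≤ t :=
        le_trans (hxmono (m + 1) j hi (by omega)) ht1
      have : |w (m + 1) - w m| * (t - x m - x (m + 1) + x m) =
          |w (m + 1) - w m| * (t - x (m + 1)) := by ring
      rw [this]
      simp only [Nat.succ_ne_zero, if_false, Nat.add_sub_cancel]
      exact max_eq_left (mul_nonneg (abs_nonneg _) (by linarith))
  -- Part B: for j < i ≤ n, R i t = 0
  have hB : ∀ k : ℕ, j + 1 + k ≤ n → R (j + 1 + k) t = 0 := by
    intro k hk
    induction k with
    | zero =>
      show R (j + 1) t = 0
      rw [hRs j (by omega), hA j le_rfl]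
      rw [mul_div_cancel_left₀ _ (hd j (by omega))]
      exact max_eq_right (mul_nonpos_of_nonneg_of_nonpos (abs_nonneg _) (by linarith))
    | succ k ih =>
      have h1 : j + 1 + (k + 1) = (j + 1 + k) + 1 := by omega
      rw [h1, hRs (j + 1 + k) (by omega), ih (by omega)]
      have hxk := hx (j + 1 + k) (by omega)
      simp only [zero_div]
      exact max_eq_right (mul_nonpos_of_nonneg_of_nonpos (abs_nonneg _) (by linarith))
  -- rewrite the sum
  have hsum : ∑ i ∈ Finset.range (n + 1),
      Real.sign (w i - (if i = 0 then 0 else w (i - 1))) * R i t =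
      ∑ i ∈ Finset.range (j + 1),
        (w i - (if i = 0 then 0 else w (i - 1))) * (t - x i) := by
    have hzero : ∀ i ∈ Finset.range (n + 1), i ∉ Finset.range (j + 1) →
        Real.sign (w i - (if i = 0 then 0 else w (i - 1))) * R i t = 0 := by
      intro i hi hni
      have hi' : i < n + 1 := Finset.mem_range.mp hi
      have hji : j + 1 ≤ i := by
        by_contra h
        exact hni (Finset.mem_range.mpr (by omega))
      have h0 : R i t = 0 := by
        have := hB (i - (j + 1)) (by omega)
        rwa [show j + 1 + (i - (j + 1)) = i by omega] at this
      rw [h0, mul_zero]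
    rw [← Finset.sum_subset (Finset.range_subset_range.mpr (by omega)) hzero]
    refine Finset.sum_congr rfl (fun i hi => ?_)
    have hij : i ≤ j := by
      have := Finset.mem_range.mp hi; omega
    rw [hA i hij, ← mul_assoc, real_sign_mul_abs]
  -- telescoping identity
  have hfin : ∀ m ≤ n, ∑ i ∈ Finset.range (m + 1),
      (w i - (if i = 0 then 0 else w (i - 1))) * (t - x i) =
      y m - y 0 + w m * (t - x m) := by
    intro m hm
    induction m with
    | zero => simp
    | succ m ih =>
      rw [Finset.sum_range_succ, ih (by omega)]
      simp only [Nat.succ_ne_zero, if_false, Nat.add_sub_cancel]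
      have hx' : x (m + 1) - x m ≠ 0 := sub_ne_zero.mpr (ne_of_gt (hx m (by omega)))
      have key : w m * (x (m + 1) - x m) = y (m + 1) - y m := by
        rw [hw m (by omega)]
        field_simp
      linear_combination key
  rw [hsum, hfin j hj]
  ring
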